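/- Let U ⊆ ℝⁿ be open and connected, let Ω : U → ℝ be a smooth function, and suppose Ω satisfies a second-order equation of the form ∂ᵢ∂ⱼΩ = Ω·Tᵢⱼ + f₁·δᵢⱼ + f₂·∂ᵢΩ·∂ⱼΩ on U, where Tᵢⱼ, f₁, f₂ are smooth. Assume at a point p ∈ U: Ω(p) = 0, ∂ᵢΩ(p) = 0 for all i, and ∂ᵢ∂ⱼΩ(p) = 2δᵢⱼ. Then for every n ≥ 1 the totally symmetric trace-free part of the n-th derivative tensor ∂_{j₁}⋯∂_{jₙ}Ω vanishes at p. -/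

import Mathlib

open Function MvPolynomial Finset

namespace TFaux

variable {d : ℕ} {U : Set (Fin d → ℝ)}

/-- directional derivative within `U`. -/
noncomputable def L (U : Set (Fin d → ℝ)) (v : Fin d → ℝ)
    (f : (Fin d → ℝ) → ℝ) (x : Fin d → ℝ) : ℝ :=
  fderivWithin ℝ f U x v

lemma L_eq_sum (v : Fin d → ℝ) (f : (Fin d → ℝ) → ℝ) (x : Fin d → ℝ) :
    L U v f x = ∑ i, v i * L U (Pi.single i 1) f x := by
  have hv : v = ∑ i, v i • (Pi.single i 1 : Fin d → ℝ) := by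
    funext j
    simp [Finset.sum_apply, Pi.single_apply, Finset.sum_ite_eq]
  conv_lhs => rw [L, hv]
  simp [L, smul_eq_mul]

lemma top_add_one_le : ((⊤:ℕ∞) : WithTop ℕ∞) + 1 ≤ ((⊤:ℕ∞) : WithTop ℕ∞) := by
  norm_num

lemma one_le_top : (1 : WithTop ℕ∞) ≤ ((⊤:ℕ∞) : WithTop ℕ∞) := by
  exact_mod_cast le_top

lemma smooth_diffOn {f : (Fin d → ℝ) → ℝ} (hf : ContDiffOn ℝ (⊤:ℕ∞) f U) :
    DifferentiableOn ℝ f U :=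
  hf.differentiableOn (by simp)

lemma L_smooth (hU : IsOpen U) {f : (Fin d → ℝ) → ℝ}
    (hf : ContDiffOn ℝ (⊤:ℕ∞) f U) (v : Fin d → ℝ) :
    ContDiffOn ℝ (⊤:ℕ∞) (L U v f) U := by
  have h1 : ContDiffOn ℝ (⊤:ℕ∞) (fderivWithin ℝ f U) U :=
    hf.fderivWithin hU.uniqueDiffOn top_add_one_le
  exact h1.clm_apply contDiffOn_const

lemma Ln_smooth (hU : IsOpen U) {f : (Fin d → ℝ) → ℝ}
    (hf : ContDiffOn ℝ (⊤:ℕ∞) f U) (v : Fin d → ℝ) (m : ℕ) :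
    ContDiffOn ℝ (⊤:ℕ∞) ((L U v)^[m] f) U := by
  induction m generalizing f with
  | zero => exact hf
  | succ m ih => rw [Function.iterate_succ_apply]; exact ih (L_smooth hU hf v)

lemma L_congr {f g : (Fin d → ℝ) → ℝ} (hfg : Set.EqOn f g U) {x : Fin d → ℝ}
    (hx : x ∈ U) (v : Fin d → ℝ) : L U v f x = L U v g x := by
  unfold L; rw [fderivWithin_congr hfg (hfg hx)]

lemma Ln_congr {f g : (Fin d → ℝ) → ℝ} (hfg : Set.EqOn f g U) (v : Fin d → ℝ) (m : ℕ) :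
    Set.EqOn ((L U v)^[m] f) ((L U v)^[m] g) U := by
  induction m generalizing f g with
  | zero => exact hfg
  | succ m ih =>
    rw [iterate_succ_apply, iterate_succ_apply]
    exact ih (fun x hx => L_congr hfg hx v)

lemma L_sum (hU : IsOpen U) {ι : Type*} (s : Finset ι) (c : ι → ℝ)
    (f : ι → (Fin d → ℝ) → ℝ) (hf : ∀ i ∈ s, ContDiffOn ℝ (⊤:ℕ∞) (f i) U)
    {x : Fin d → ℝ} (hx : x ∈ U) (v : Fin d → ℝ) :
    L U v (fun y => ∑ i ∈ s, c i * f i y) x = ∑ i ∈ s, c i * L U v (f i) x := by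
  unfold L
  rw [fderivWithin_fun_sum (hU.uniqueDiffOn x hx)
    (fun i hi => ((smooth_diffOn (hf i hi)) x hx).const_mul (c i))]
  simp only [ContinuousLinearMap.sum_apply]
  refine Finset.sum_congr rfl fun i hi => ?_
  rw [fderivWithin_const_mul (hU.uniqueDiffOn x hx) ((smooth_diffOn (hf i hi)) x hx)]
  simp

lemma L_const_mul (hU : IsOpen U) {f : (Fin d → ℝ) → ℝ}
    (hf : ContDiffOn ℝ (⊤:ℕ∞) f U) (c : ℝ) {x : Fin d → ℝ} (hx : x ∈ U) (v : Fin d → ℝ) :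
    L U v (fun y => c * f y) x = c * L U v f x := by
  unfold L
  rw [fderivWithin_const_mul (hU.uniqueDiffOn x hx) ((smooth_diffOn hf) x hx)]
  simp

lemma L_add (hU : IsOpen U) {f g : (Fin d → ℝ) → ℝ}
    (hf : ContDiffOn ℝ (⊤:ℕ∞) f U) (hg : ContDiffOn ℝ (⊤:ℕ∞) g U)
    {x : Fin d → ℝ} (hx : x ∈ U) (v : Fin d → ℝ) :
    L U v (fun y => f y + g y) x = L U v f x + L U v g x := by
  unfold L
  rw [fderivWithin_fun_add (hU.uniqueDiffOn x hx) ((smooth_diffOn hf) x hx)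
    ((smooth_diffOn hg) x hx)]
  simp

lemma L_mul (hU : IsOpen U) {f g : (Fin d → ℝ) → ℝ}
    (hf : ContDiffOn ℝ (⊤:ℕ∞) f U) (hg : ContDiffOn ℝ (⊤:ℕ∞) g U)
    {x : Fin d → ℝ} (hx : x ∈ U) (v : Fin d → ℝ) :
    L U v (fun y => f y * g y) x = L U v f x * g x + f x * L U v g x := by
  unfold L
  rw [fderivWithin_fun_mul (hU.uniqueDiffOn x hx) ((smooth_diffOn hf) x hx)
    ((smooth_diffOn hg) x hx)]
  simp only [ContinuousLinearMap.add_apply, ContinuousLinearMap.coe_smul', Pi.smul_apply, smul_eq_mul]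
  ring

lemma Ln_sum (hU : IsOpen U) {ι : Type*} (s : Finset ι) (c : ι → ℝ)
    (f : ι → (Fin d → ℝ) → ℝ) (hf : ∀ i ∈ s, ContDiffOn ℝ (⊤:ℕ∞) (f i) U)
    (v : Fin d → ℝ) (m : ℕ) :
    ∀ x ∈ U, (L U v)^[m] (fun y => ∑ i ∈ s, c i * f i y) x
      = ∑ i ∈ s, c i * (L U v)^[m] (f i) x := by
  induction m generalizing f with
  | zero => intro x hx; simp
  | succ m ih =>
    intro x hx
    rw [iterate_succ_apply]
    have h1 : Set.EqOn (L U v (fun y => ∑ i ∈ s, c i * f i y))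
        (fun y => ∑ i ∈ s, c i * L U v (f i) y) U :=
      fun y hy => L_sum hU s c f hf hy v
    rw [Ln_congr h1 v m hx]
    have := ih (fun i => L U v (f i)) (fun i hi => L_smooth hU (hf i hi) v) x hx
    rw [this]
    exact Finset.sum_congr rfl fun i _ => by rw [← iterate_succ_apply]

lemma Ln_const_mul (hU : IsOpen U) {f : (Fin d → ℝ) → ℝ}
    (hf : ContDiffOn ℝ (⊤:ℕ∞) f U) (c : ℝ) (v : Fin d → ℝ) (m : ℕ) :
    ∀ x ∈ U, (L U v)^[m] (fun y => c * f y) x = c * (L U v)^[m] f x := by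
  induction m generalizing f with
  | zero => intro x hx; simp
  | succ m ih =>
    intro x hx
    rw [iterate_succ_apply]
    have h1 : Set.EqOn (L U v (fun y => c * f y)) (fun y => c * L U v f y) U :=
      fun y hy => L_const_mul hU hf c hy v
    rw [Ln_congr h1 v m hx, ih (L_smooth hU hf v) x hx, ← iterate_succ_apply]

lemma Ln_add (hU : IsOpen U) {f g : (Fin d → ℝ) → ℝ}
    (hf : ContDiffOn ℝ (⊤:ℕ∞) f U) (hg : ContDiffOn ℝ (⊤:ℕ∞) g U)
    (v : Fin d → ℝ) (m : ℕ) :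
    ∀ x ∈ U, (L U v)^[m] (fun y => f y + g y) x
      = (L U v)^[m] f x + (L U v)^[m] g x := by
  induction m generalizing f g with
  | zero => intro x hx; simp
  | succ m ih =>
    intro x hx
    rw [iterate_succ_apply]
    have h1 : Set.EqOn (L U v (fun y => f y + g y))
        (fun y => L U v f y + L U v g y) U :=
      fun y hy => L_add hU hf hg hy v
    rw [Ln_congr h1 v m hx, ih (L_smooth hU hf v) (L_smooth hU hg v) x hx,
      ← iterate_succ_apply, ← iterate_succ_apply]

lemma binom_aux (m : ℕ) (a b : ℕ → ℝ) :
    ∑ k ∈ range (m+2), (((m+1).choose k : ℕ) : ℝ) * (a k * b (m+1-k))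
      = ∑ k ∈ range (m+1), ((m.choose k : ℕ) : ℝ) * (a (k+1) * b (m-k))
      + ∑ k ∈ range (m+1), ((m.choose k : ℕ) : ℝ) * (a k * b (m+1-k)) := by
  rw [Finset.sum_range_succ' (fun k => (((m+1).choose k : ℕ) : ℝ) * (a k * b (m+1-k))) (m+1)]
  have h1 : ∀ k, (m+1).choose (k+1) = m.choose k + m.choose (k+1) := fun k =>
    Nat.choose_succ_succ m k
  have h2 : ∑ k ∈ range (m+1), (((m+1).choose (k+1) : ℕ) : ℝ) * (a (k+1) * b (m+1-(k+1)))
      = ∑ k ∈ range (m+1), ((m.choose k : ℕ) : ℝ) * (a (k+1) * b (m-k))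
      + ∑ k ∈ range (m+1), ((m.choose (k+1) : ℕ) : ℝ) * (a (k+1) * b (m-k)) := by
    rw [← Finset.sum_add_distrib]
    refine Finset.sum_congr rfl fun k hk => ?_
    rw [h1 k]
    have : m + 1 - (k+1) = m - k := by omega
    rw [this]
    push_cast
    ring
  rw [h2]
  have h3 : ∑ k ∈ range (m+1), ((m.choose (k+1) : ℕ) : ℝ) * (a (k+1) * b (m-k))
      = ∑ k ∈ range m, ((m.choose (k+1) : ℕ) : ℝ) * (a (k+1) * b (m-k)) := by
    rw [Finset.sum_range_succ, Nat.choose_succ_self]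
    simp
  have h4 : ∑ k ∈ range (m+1), ((m.choose k : ℕ) : ℝ) * (a k * b (m+1-k))
      = ∑ k ∈ range m, ((m.choose (k+1) : ℕ) : ℝ) * (a (k+1) * b (m-k))
      + (((m+1).choose 0 : ℕ) : ℝ) * (a 0 * b (m+1)) := by
    rw [Finset.sum_range_succ' (fun k => ((m.choose k : ℕ) : ℝ) * (a k * b (m+1-k))) m]
    simp only [Nat.choose_zero_right, Nat.cast_one, Nat.sub_zero]
    congr 1
    refine Finset.sum_congr rfl fun k hk => ?_
    have : m + 1 - (k+1) = m - k := by omega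
    rw [this]
  rw [h3, h4]
  simp only [Nat.sub_zero]
  ring

lemma Ln_mul (hU : IsOpen U) (v : Fin d → ℝ) :
    ∀ (m : ℕ) {f g : (Fin d → ℝ) → ℝ}, ContDiffOn ℝ (⊤:ℕ∞) f U →
    ContDiffOn ℝ (⊤:ℕ∞) g U → ∀ x ∈ U,
    (L U v)^[m] (fun y => f y * g y) x
      = ∑ k ∈ range (m+1), ((m.choose k : ℕ) : ℝ)
          * ((L U v)^[k] f x * (L U v)^[m-k] g x) := by
  intro m
  induction m with
  | zero => intro f g hf hg x hx; simp
  | succ m ih =>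
    intro f g hf hg x hx
    rw [iterate_succ_apply]
    have h1 : Set.EqOn (L U v (fun y => f y * g y))
        (fun y => L U v f y * g y + f y * L U v g y) U :=
      fun y hy => L_mul hU hf hg hy v
    rw [Ln_congr h1 v m hx]
    have hLf := L_smooth hU hf v
    have hLg := L_smooth hU hg v
    rw [Ln_add hU (hLf.mul hg) (hf.mul hLg) v m x hx]
    rw [ih hLf hg x hx, ih hf hLg x hx]
    have e1 : ∀ k : ℕ, (L U v)^[k] (L U v f) = (L U v)^[k+1] f :=
      fun k => (iterate_succ_apply (L U v) k f).symm
    have e2 : ∀ k : ℕ, (L U v)^[k] (L U v g) = (L U v)^[k+1] g :=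
      fun k => (iterate_succ_apply (L U v) k g).symm
    have hb := binom_aux m (fun k => (L U v)^[k] f x) (fun k => (L U v)^[k] g x)
    simp only [e1, e2]
    rw [show m + 1 + 1 = m + 2 from rfl, hb]
    congr 1
    refine Finset.sum_congr rfl fun k hk => ?_
    have hmk : m - k + 1 = m + 1 - k := by
      have := Finset.mem_range.1 hk; omega
    rw [hmk]

lemma Ln_rep (hU : IsOpen U) {p : Fin d → ℝ} (hp : p ∈ U) :
    ∀ (m : ℕ) {g : (Fin d → ℝ) → ℝ}, ContDiffOn ℝ (⊤:ℕ∞) g U →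
    ∃ Q : MvPolynomial (Fin d) ℝ, ∀ v, (L U v)^[m] g p = eval v Q := by
  intro m
  induction m with
  | zero => intro g hg; exact ⟨MvPolynomial.C (g p), by simp⟩
  | succ m ih =>
    intro g hg
    have h : ∀ i : Fin d, ∃ Q : MvPolynomial (Fin d) ℝ,
        ∀ v, (L U v)^[m] (L U (Pi.single i 1) g) p = eval v Q :=
      fun i => ih (L_smooth hU hg _)
    choose Qs hQs using h
    refine ⟨∑ i, X i * Qs i, fun v => ?_⟩
    rw [iterate_succ_apply]
    have h1 : Set.EqOn (L U v g) (fun y => ∑ i, v i * L U (Pi.single i 1) g y) U :=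
      fun y _ => L_eq_sum v g y
    rw [Ln_congr h1 v m hp,
      Ln_sum hU Finset.univ (fun i => v i) (fun i => L U (Pi.single i 1) g)
        (fun i _ => L_smooth hU hg _) v m p hp]
    simp [hQs]

lemma iter_eq (hU : IsOpen U) :
    ∀ (m : ℕ) {f : (Fin d → ℝ) → ℝ}, ContDiffOn ℝ (⊤:ℕ∞) f U →
    ∀ {x : Fin d → ℝ}, x ∈ U → ∀ v : Fin d → ℝ,
    iteratedFDerivWithin ℝ m f U x (fun _ => v) = (L U v)^[m] f x := by
  intro m
  induction m with
  | zero => intro f hf x hx v; simp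
  | succ m ih =>
    intro f hf x hx v
    rw [iteratedFDerivWithin_succ_apply_right hU.uniqueDiffOn hx]
    have hfd : ContDiffOn ℝ (⊤:ℕ∞) (fderivWithin ℝ f U) U :=
      hf.fderivWithin hU.uniqueDiffOn top_add_one_le
    have hcomp := (ContinuousLinearMap.apply ℝ ℝ v).iteratedFDerivWithin_comp_left
      (f := fderivWithin ℝ f U) (hfd x hx) hU.uniqueDiffOn hx
      (i := m) (by exact_mod_cast le_top)
    have hfun : (fun y => (ContinuousLinearMap.apply ℝ ℝ v) (fderivWithin ℝ f U y))
        = L U v f := rfl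
    have hinit : (Fin.init fun _ : Fin (m+1) => v) = fun _ : Fin m => v := by
      funext i; rfl
    calc iteratedFDerivWithin ℝ m (fderivWithin ℝ f U) U x
          (Fin.init fun _ => v) ((fun _ => v) (Fin.last m))
        = (ContinuousLinearMap.apply ℝ ℝ v)
            (iteratedFDerivWithin ℝ m (fderivWithin ℝ f U) U x (Fin.init fun _ => v)) := rfl
      _ = iteratedFDerivWithin ℝ m
            ((ContinuousLinearMap.apply ℝ ℝ v) ∘ fderivWithin ℝ f U) U x
            (Fin.init fun _ => v) := by
          rw [hcomp]; rfl
      _ = iteratedFDerivWithin ℝ m (L U v f) U x (fun _ => v) := by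
          rw [hinit]; rfl
      _ = (L U v)^[m] (L U v f) x := ih (L_smooth hU hf v) hx v
      _ = (L U v)^[m+1] f x := by rw [iterate_succ_apply]

end TFaux


/-- The partial derivative `∂ᵢ f` within a set `U ⊆ ℝᵈ`. -/
noncomputable def pdW {d : ℕ} (U : Set (Fin d → ℝ)) (i : Fin d)
    (f : (Fin d → ℝ) → ℝ) (x : Fin d → ℝ) : ℝ :=
  fderivWithin ℝ f U x (Pi.single i 1)

/-- A symmetric `n`-tensor has vanishing totally symmetric trace-free part iff the
associated homogeneous polynomial `x ↦ A(x,…,x)` is divisible by `r² = ∑ xᵢ²`.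
We use this as the formalization of "the symmetric trace-free part vanishes". -/
def TraceFreePartVanishes {d : ℕ} (n : ℕ) (A : (Fin d → ℝ) → ℝ) : Prop :=
  ∃ Q : MvPolynomial (Fin d) ℝ, ∀ x : Fin d → ℝ,
    A x = (∑ i, x i ^ 2) * MvPolynomial.eval x Q

/-- if a smooth `Ω` on an open connected `U ⊆ ℝᵈ` satisfies
`∂ᵢ∂ⱼΩ = Ω Tᵢⱼ + f₁ δᵢⱼ + f₂ ∂ᵢΩ ∂ⱼΩ` with smooth `T, f₁, f₂`, and at `p ∈ U`
`Ω(p) = 0`, `∂ᵢΩ(p) = 0`, `∂ᵢ∂ⱼΩ(p) = 2δᵢⱼ`, then for every `n ≥ 1` the totally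
symmetric trace-free part of `∂_{j₁}⋯∂_{jₙ}Ω` vanishes at `p`. -/
theorem trace_free_derivatives_vanish {d : ℕ}
    (U : Set (Fin d → ℝ)) (hUopen : IsOpen U) (hUconn : IsConnected U)
    (Ω f₁ f₂ : (Fin d → ℝ) → ℝ) (T : Fin d → Fin d → (Fin d → ℝ) → ℝ)
    (hΩ : ContDiffOn ℝ (⊤ : ℕ∞) Ω U)
    (hT : ∀ i j, ContDiffOn ℝ (⊤ : ℕ∞) (T i j) U)
    (hf₁ : ContDiffOn ℝ (⊤ : ℕ∞) f₁ U)
    (hf₂ : ContDiffOn ℝ (⊤ : ℕ∞) f₂ U)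
    (heq : ∀ x ∈ U, ∀ i j, pdW U i (pdW U j Ω) x =
      Ω x * T i j x + f₁ x * (if i = j then 1 else 0) + f₂ x * pdW U i Ω x * pdW U j Ω x)
    (p : Fin d → ℝ) (hp : p ∈ U)
    (hΩp : Ω p = 0)
    (hdΩp : ∀ i, pdW U i Ω p = 0)
    (hddΩp : ∀ i j, pdW U i (pdW U j Ω) p = if i = j then 2 else 0) :
    ∀ n : ℕ, 1 ≤ n →
      TraceFreePartVanishes n (fun x => iteratedFDerivWithin ℝ n Ω U p (fun _ => x)) := by

  -- translate hypotheses into the language of the directional derivative `TFaux.L`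
  have heq' : ∀ x ∈ U, ∀ i j, TFaux.L U (Pi.single i 1) (TFaux.L U (Pi.single j 1) Ω) x =
      Ω x * T i j x + f₁ x * (if i = j then 1 else 0)
        + f₂ x * TFaux.L U (Pi.single i 1) Ω x * TFaux.L U (Pi.single j 1) Ω x := heq
  have hdΩp' : ∀ i, TFaux.L U (Pi.single i 1) Ω p = 0 := hdΩp
  have key : ∀ n : ℕ, 1 ≤ n → ∃ Q : MvPolynomial (Fin d) ℝ, ∀ v : Fin d → ℝ,
      (TFaux.L U v)^[n] Ω p = (∑ i, v i ^ 2) * MvPolynomial.eval v Q := by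
    intro n
    induction n using Nat.strong_induction_on with
    | _ n IH =>
    intro hn
    rcases n with _ | n
    · omega
    rcases n with _ | m
    · -- base case n = 1
      refine ⟨0, fun v => ?_⟩
      rw [Function.iterate_one, TFaux.L_eq_sum v Ω p]
      simp [hdΩp']
    · -- inductive case n = m + 2
      have hQΩex : ∀ k : ℕ, ∃ Q : MvPolynomial (Fin d) ℝ,
          k ≤ m+1 → ∀ v : Fin d → ℝ,
            (TFaux.L U v)^[k] Ω p = (∑ i, v i ^ 2) * MvPolynomial.eval v Q := by
        intro k
        rcases Nat.eq_zero_or_pos k with hk | hk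
        · subst hk
          exact ⟨0, fun _ v => by simp [hΩp]⟩
        · rcases Nat.lt_or_ge k (m+2) with hlt | hge
          · obtain ⟨Q, hQ⟩ := IH k hlt hk
            exact ⟨Q, fun _ => hQ⟩
          · exact ⟨0, fun hle => absurd hle (by omega)⟩
      choose QΩ hQΩ using hQΩex
      have hRTex : ∀ (q : Fin d × Fin d) (k : ℕ), ∃ Q : MvPolynomial (Fin d) ℝ,
          ∀ v, (TFaux.L U v)^[k] (T q.2 q.1) p = MvPolynomial.eval v Q :=
        fun q k => TFaux.Ln_rep hUopen hp k (hT q.2 q.1)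
      choose RT hRT using hRTex
      obtain ⟨R1, hR1⟩ := TFaux.Ln_rep hUopen hp m hf₁
      have hR2ex : ∀ k : ℕ, ∃ Q : MvPolynomial (Fin d) ℝ,
          ∀ v, (TFaux.L U v)^[k] f₂ p = MvPolynomial.eval v Q :=
        fun k => TFaux.Ln_rep hUopen hp k hf₂
      choose R2 hR2 using hR2ex
      refine ⟨(∑ k ∈ Finset.range (m+1), (m.choose k : MvPolynomial (Fin d) ℝ) * QΩ k
          * (∑ q : Fin d × Fin d, X q.1 * X q.2 * RT q (m-k)))
        + R1
        + (∑ k ∈ Finset.range (m+1), (m.choose k : MvPolynomial (Fin d) ℝ) * R2 k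
          * (∑ i ∈ Finset.range (m-k+1), ((m-k).choose i : MvPolynomial (Fin d) ℝ)
              * (QΩ (i+1) * ((∑ j, (X j : MvPolynomial (Fin d) ℝ) ^ 2) * QΩ (m-k-i+1))))),
        fun v => ?_⟩
      -- notation
      set Tv : (Fin d → ℝ) → ℝ :=
        fun y => ∑ q : Fin d × Fin d, (v q.1 * v q.2) * T q.2 q.1 y with hTvdef
      have hTv : ContDiffOn ℝ (⊤:ℕ∞) Tv U :=
        ContDiffOn.sum fun q _ => contDiffOn_const.mul (hT q.2 q.1)
      have hLΩ := TFaux.L_smooth hUopen hΩ v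
      -- the contracted second-order equation
      have key2 : Set.EqOn (TFaux.L U v (TFaux.L U v Ω))
          (fun y => (Ω y * Tv y + (∑ i, v i ^ 2) * f₁ y)
            + f₂ y * (TFaux.L U v Ω y * TFaux.L U v Ω y)) U := by
        intro x hx
        have e1 : TFaux.L U v Ω = fun y => ∑ j, v j * TFaux.L U (Pi.single j 1) Ω y :=
          funext fun y => TFaux.L_eq_sum v Ω y
        have step1 : TFaux.L U v (TFaux.L U v Ω) x
            = ∑ j, v j * TFaux.L U v (TFaux.L U (Pi.single j 1) Ω) x := by
          conv_lhs => rw [e1]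
          exact TFaux.L_sum hUopen Finset.univ (fun j => v j)
            (fun j => TFaux.L U (Pi.single j 1) Ω)
            (fun j _ => TFaux.L_smooth hUopen hΩ _) hx v
        have step2 : ∀ j, TFaux.L U v (TFaux.L U (Pi.single j 1) Ω) x
            = ∑ i, v i * TFaux.L U (Pi.single i 1) (TFaux.L U (Pi.single j 1) Ω) x :=
          fun j => TFaux.L_eq_sum v _ x
        calc TFaux.L U v (TFaux.L U v Ω) x
            = ∑ j, v j * ∑ i, v i
                * TFaux.L U (Pi.single i 1) (TFaux.L U (Pi.single j 1) Ω) x := by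
              rw [step1]; exact Finset.sum_congr rfl fun j _ => by rw [step2 j]
          _ = ∑ j, ∑ i, ((v j * v i) * (Ω x * T i j x)
              + ((v j * v i) * (f₁ x * (if i = j then 1 else 0))
              + (v j * v i) * (f₂ x * TFaux.L U (Pi.single i 1) Ω x
                  * TFaux.L U (Pi.single j 1) Ω x))) := by
              refine Finset.sum_congr rfl fun j _ => ?_
              rw [Finset.mul_sum]
              refine Finset.sum_congr rfl fun i _ => ?_
              rw [heq' x hx i j]; ring
          _ = (∑ j, ∑ i, (v j * v i) * (Ω x * T i j x))
              + ((∑ j, ∑ i, (v j * v i) * (f₁ x * (if i = j then 1 else 0)))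
              + (∑ j, ∑ i, (v j * v i) * (f₂ x * TFaux.L U (Pi.single i 1) Ω x
                  * TFaux.L U (Pi.single j 1) Ω x))) := by
              simp [Finset.sum_add_distrib]
          _ = (fun y => (Ω y * Tv y + (∑ i, v i ^ 2) * f₁ y)
              + f₂ y * (TFaux.L U v Ω y * TFaux.L U v Ω y)) x := by
              have pieceA : ∑ j, ∑ i, (v j * v i) * (Ω x * T i j x) = Ω x * Tv x := by
                rw [hTvdef]
                simp only [Finset.mul_sum, Fintype.sum_prod_type]
                exact Finset.sum_congr rfl fun j _ =>
                  Finset.sum_congr rfl fun i _ => by ring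
              have pieceB : ∑ j, ∑ i, (v j * v i) * (f₁ x * (if i = j then 1 else 0))
                  = (∑ i, v i ^ 2) * f₁ x := by
                have hinner : ∀ j, ∑ i, (v j * v i) * (f₁ x * (if i = j then 1 else 0))
                    = v j ^ 2 * f₁ x := by
                  intro j
                  rw [Finset.sum_eq_single j]
                  · rw [if_pos rfl, mul_one]; ring
                  · intro i _ hij; simp [hij]
                  · intro h; exact absurd (Finset.mem_univ j) h
                rw [Finset.sum_congr rfl fun j _ => hinner j, ← Finset.sum_mul]
              have pieceC : ∑ j, ∑ i, (v j * v i) * (f₂ x * TFaux.L U (Pi.single i 1) Ω x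
                  * TFaux.L U (Pi.single j 1) Ω x)
                  = f₂ x * (TFaux.L U v Ω x * TFaux.L U v Ω x) := by
                rw [TFaux.L_eq_sum v Ω x, Finset.sum_mul_sum]
                rw [Finset.mul_sum]
                refine Finset.sum_congr rfl fun j _ => ?_
                rw [Finset.mul_sum]
                refine Finset.sum_congr rfl fun i _ => ?_
                ring
              simp only []
              rw [pieceA, pieceB, pieceC]
              ring
      -- smoothness of the pieces
      have hF1 : ContDiffOn ℝ (⊤:ℕ∞) (fun y => Ω y * Tv y) U := hΩ.mul hTv
      have hF2 : ContDiffOn ℝ (⊤:ℕ∞) (fun y => (∑ i, v i ^ 2) * f₁ y) U :=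
        contDiffOn_const.mul hf₁
      have hG : ContDiffOn ℝ (⊤:ℕ∞)
          (fun y => TFaux.L U v Ω y * TFaux.L U v Ω y) U := hLΩ.mul hLΩ
      have hF3 : ContDiffOn ℝ (⊤:ℕ∞)
          (fun y => f₂ y * (TFaux.L U v Ω y * TFaux.L U v Ω y)) U := hf₂.mul hG
      -- main Leibniz expansion
      have main : (TFaux.L U v)^[m+2] Ω p
          = (TFaux.L U v)^[m] (fun y => Ω y * Tv y) p
          + ((∑ i, v i ^ 2) * (TFaux.L U v)^[m] f₁ p
          + (TFaux.L U v)^[m]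
              (fun y => f₂ y * (TFaux.L U v Ω y * TFaux.L U v Ω y)) p) := by
        rw [show m+2 = m+1+1 from rfl, Function.iterate_succ_apply,
          Function.iterate_succ_apply]
        rw [TFaux.Ln_congr key2 v m hp]
        rw [TFaux.Ln_add hUopen (hF1.add hF2) hF3 v m p hp]
        rw [TFaux.Ln_add hUopen hF1 hF2 v m p hp]
        rw [TFaux.Ln_const_mul hUopen hf₁ (∑ i, v i ^ 2) v m p hp]
        rw [add_assoc]
      -- evaluating the pieces
      have tTv : ∀ j' : ℕ, (TFaux.L U v)^[j'] Tv p
          = ∑ q : Fin d × Fin d, v q.1 * v q.2 * MvPolynomial.eval v (RT q j') := by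
        intro j'
        rw [hTvdef]
        rw [TFaux.Ln_sum hUopen Finset.univ (fun q : Fin d × Fin d => v q.1 * v q.2)
          (fun q => T q.2 q.1) (fun q _ => hT q.2 q.1) v j' p hp]
        exact Finset.sum_congr rfl fun q _ => by rw [hRT q j' v]
      have tA : (TFaux.L U v)^[m] (fun y => Ω y * Tv y) p
          = (∑ i, v i ^ 2) * ∑ k ∈ Finset.range (m+1),
              (m.choose k : ℝ) * MvPolynomial.eval v (QΩ k)
              * (∑ q : Fin d × Fin d, v q.1 * v q.2 * MvPolynomial.eval v (RT q (m-k))) := by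
        rw [TFaux.Ln_mul hUopen v m hΩ hTv p hp, Finset.mul_sum]
        refine Finset.sum_congr rfl fun k hk => ?_
        have hk' : k ≤ m + 1 := by have := Finset.mem_range.1 hk; omega
        rw [hQΩ k hk' v, tTv (m-k)]
        ring
      have tG : ∀ j' : ℕ, j' ≤ m →
          (TFaux.L U v)^[j'] (fun y => TFaux.L U v Ω y * TFaux.L U v Ω y) p
          = ∑ i ∈ Finset.range (j'+1), (j'.choose i : ℝ)
              * ((∑ i, v i ^ 2) * MvPolynomial.eval v (QΩ (i+1))
                 * ((∑ i, v i ^ 2) * MvPolynomial.eval v (QΩ (j'-i+1)))) := by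
        intro j' hj'
        rw [TFaux.Ln_mul hUopen v j' hLΩ hLΩ p hp]
        refine Finset.sum_congr rfl fun i hi => ?_
        have hi' : i ≤ j' := by have := Finset.mem_range.1 hi; omega
        have e1 : (TFaux.L U v)^[i] (TFaux.L U v Ω) = (TFaux.L U v)^[i+1] Ω :=
          (Function.iterate_succ_apply _ _ _).symm
        have e2 : (TFaux.L U v)^[j'-i] (TFaux.L U v Ω) = (TFaux.L U v)^[j'-i+1] Ω :=
          (Function.iterate_succ_apply _ _ _).symm
        rw [e1, e2, hQΩ (i+1) (by omega) v, hQΩ (j'-i+1) (by omega) v]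
      have tC : (TFaux.L U v)^[m]
            (fun y => f₂ y * (TFaux.L U v Ω y * TFaux.L U v Ω y)) p
          = (∑ i, v i ^ 2) * ∑ k ∈ Finset.range (m+1),
              (m.choose k : ℝ) * MvPolynomial.eval v (R2 k)
              * (∑ i ∈ Finset.range (m-k+1), ((m-k).choose i : ℝ)
                  * (MvPolynomial.eval v (QΩ (i+1))
                     * ((∑ j, v j ^ 2) * MvPolynomial.eval v (QΩ (m-k-i+1))))) := by
        rw [TFaux.Ln_mul hUopen v m hf₂ hG p hp, Finset.mul_sum]
        refine Finset.sum_congr rfl fun k hk => ?_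
        rw [hR2 k v, tG (m-k) (by omega)]
        have hin : ∑ i ∈ Finset.range (m-k+1), ((m-k).choose i : ℝ)
              * ((∑ i, v i ^ 2) * MvPolynomial.eval v (QΩ (i+1))
                 * ((∑ i, v i ^ 2) * MvPolynomial.eval v (QΩ (m-k-i+1))))
            = (∑ i, v i ^ 2) * ∑ i ∈ Finset.range (m-k+1), ((m-k).choose i : ℝ)
              * (MvPolynomial.eval v (QΩ (i+1))
                 * ((∑ j, v j ^ 2) * MvPolynomial.eval v (QΩ (m-k-i+1)))) := by
          rw [Finset.mul_sum]
          exact Finset.sum_congr rfl fun i _ => by ring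
        rw [hin]
        ring
      rw [main, tA, hR1, tC]
      have evalQ : MvPolynomial.eval v
          ((∑ k ∈ Finset.range (m+1), (m.choose k : MvPolynomial (Fin d) ℝ) * QΩ k
            * (∑ q : Fin d × Fin d, X q.1 * X q.2 * RT q (m-k)))
          + R1
          + (∑ k ∈ Finset.range (m+1), (m.choose k : MvPolynomial (Fin d) ℝ) * R2 k
            * (∑ i ∈ Finset.range (m-k+1), ((m-k).choose i : MvPolynomial (Fin d) ℝ)
                * (QΩ (i+1) * ((∑ j, (X j : MvPolynomial (Fin d) ℝ) ^ 2) * QΩ (m-k-i+1))))))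
          = (∑ k ∈ Finset.range (m+1),
              (m.choose k : ℝ) * MvPolynomial.eval v (QΩ k)
              * (∑ q : Fin d × Fin d, v q.1 * v q.2 * MvPolynomial.eval v (RT q (m-k))))
          + MvPolynomial.eval v R1
          + (∑ k ∈ Finset.range (m+1),
              (m.choose k : ℝ) * MvPolynomial.eval v (R2 k)
              * (∑ i ∈ Finset.range (m-k+1), ((m-k).choose i : ℝ)
                  * (MvPolynomial.eval v (QΩ (i+1))
                     * ((∑ j, v j ^ 2) * MvPolynomial.eval v (QΩ (m-k-i+1)))))) := by
        simp only [map_add, map_sum, map_mul, map_natCast, map_pow, MvPolynomial.eval_X]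
      rw [evalQ]
      ring
  intro n hn
  obtain ⟨Q, hQ⟩ := key n hn
  refine ⟨Q, fun v => ?_⟩
  show iteratedFDerivWithin ℝ n Ω U p (fun _ => v) = _
  rw [TFaux.iter_eq hUopen n hΩ hp v]
  exact hQ v
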